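/- There exists a 2-factorization of the graph K_48 − I (the complete graph on 48 vertices minus a perfect matching I) having exactly 7 triangle-factors and 16 quadrangle-factors; i.e., the Hamilton–Waterloo problem HWP(48; 3, 4; 7, 16) has a solution. -/

import Mathlib

/-- `H` is a 2-factor of the simple graph `G`: a spanning 2-regular subgraph of `G`
(every vertex has exactly two neighbours in `H`). -/
def IsTwoFactor {V : Type*} (G H : SimpleGraph V) : Prop :=
  H ≤ G ∧ ∀ v : V, (H.neighborSet v).ncard = 2

/-- `H` is a 2-factor of `G` all of whose connected components are cycles of length `n`:
since `H` is 2-regular, this is equivalent to requiring that every connected component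
of `H` has exactly `n` vertices. For `n = 3` this is a triangle-factor, for `n = 4` a
quadrangle-factor. -/
def IsCycleFactor {V : Type*} (G H : SimpleGraph V) (n : ℕ) : Prop :=
  IsTwoFactor G H ∧ ∀ v : V, (H.connectedComponentMk v).supp.ncard = n

/-- `F` is a solution of the Hamilton--Waterloo problem HWP on the graph `G` with `r`
triangle-factors and `s` quadrangle-factors: the `r + s` factors `F i` are 2-factors of `G`
whose edge sets partition the edge set of `G` (every edge of `G` lies in exactly one factor),
the first `r` of them being triangle-factors and the remaining `s` quadrangle-factors. -/
def IsHWPSolution {V : Type*} (G : SimpleGraph V) (r s : ℕ)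
    (F : Fin (r + s) → SimpleGraph V) : Prop :=
  (∀ i : Fin (r + s), (i : ℕ) < r → IsCycleFactor G (F i) 3) ∧
  (∀ i : Fin (r + s), r ≤ (i : ℕ) → IsCycleFactor G (F i) 4) ∧
  (∀ e : Sym2 V, e ∈ G.edgeSet → ∃! i : Fin (r + s), e ∈ (F i).edgeSet)

def MU : List Nat := [6, 7, 8, 9, 10, 11, 0, 1, 2, 3, 4, 5, 18, 19, 20, 21, 22, 23, 12, 13, 14, 15, 16, 17, 30, 31, 32, 33, 34, 35, 24, 25, 26, 27, 28, 29, 42, 43, 44, 45, 46, 47, 36, 37, 38, 39, 40, 41]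

def SIG : List (List Nat) := [
  [17, 19, 16, 18, 13, 15, 12, 14, 25, 27, 24, 26, 28, 29, 30, 31, 36, 37, 38, 39, 33, 35, 32, 34, 44, 45, 46, 47, 6, 4, 7, 5, 40, 41, 42, 43, 2, 0, 3, 1, 22, 20, 23, 21, 10, 8, 11, 9],
  [19, 17, 18, 16, 15, 13, 14, 12, 27, 25, 26, 24, 29, 28, 31, 30, 37, 36, 39, 38, 35, 33, 34, 32, 45, 44, 47, 46, 5, 7, 4, 6, 41, 40, 43, 42, 1, 3, 0, 2, 21, 23, 20, 22, 9, 11, 8, 10],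
  [18, 16, 19, 17, 14, 12, 15, 13, 26, 24, 27, 25, 30, 31, 28, 29, 38, 39, 36, 37, 34, 32, 35, 33, 46, 47, 44, 45, 4, 6, 5, 7, 42, 43, 40, 41, 0, 2, 1, 3, 20, 22, 21, 23, 8, 10, 9, 11],
  [16, 18, 17, 19, 12, 14, 13, 15, 24, 26, 25, 27, 31, 30, 29, 28, 39, 38, 37, 36, 32, 34, 33, 35, 47, 46, 45, 44, 7, 5, 6, 4, 43, 42, 41, 40, 3, 1, 2, 0, 23, 21, 22, 20, 11, 9, 10, 8],
  [2, 5, 4, 7, 0, 10, 8, 11, 9, 6, 1, 3, 14, 17, 16, 19, 12, 22, 20, 23, 21, 18, 13, 15, 26, 29, 28, 31, 24, 34, 32, 35, 33, 30, 25, 27, 38, 41, 40, 43, 36, 46, 44, 47, 45, 42, 37, 39],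
  [10, 4, 6, 5, 9, 8, 7, 2, 3, 1, 11, 0, 22, 16, 18, 17, 21, 20, 19, 14, 15, 13, 23, 12, 34, 28, 30, 29, 33, 32, 31, 26, 27, 25, 35, 24, 46, 40, 42, 41, 45, 44, 43, 38, 39, 37, 47, 36],
  [5, 8, 9, 4, 6, 7, 3, 0, 11, 10, 2, 1, 17, 20, 21, 16, 18, 19, 15, 12, 23, 22, 14, 13, 29, 32, 33, 28, 30, 31, 27, 24, 35, 34, 26, 25, 41, 44, 45, 40, 42, 43, 39, 36, 47, 46, 38, 37],
  [32, 33, 46, 47, 20, 21, 38, 39, 16, 17, 30, 31, 24, 25, 42, 43, 9, 8, 28, 29, 5, 4, 36, 37, 13, 12, 40, 41, 19, 18, 11, 10, 1, 0, 44, 45, 23, 22, 7, 6, 27, 26, 15, 14, 35, 34, 3, 2],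
  [35, 44, 33, 45, 23, 36, 21, 37, 19, 28, 17, 29, 27, 40, 25, 41, 30, 11, 31, 9, 38, 7, 39, 5, 42, 15, 43, 13, 8, 10, 18, 16, 46, 3, 47, 1, 4, 6, 22, 20, 12, 14, 26, 24, 0, 2, 34, 32],
  [46, 47, 34, 35, 38, 39, 22, 23, 30, 31, 18, 19, 42, 43, 26, 27, 28, 29, 11, 10, 36, 37, 7, 6, 40, 41, 15, 14, 17, 16, 9, 8, 44, 45, 3, 2, 21, 20, 5, 4, 25, 24, 13, 12, 33, 32, 1, 0],
  [34, 45, 32, 44, 22, 37, 20, 36, 18, 29, 16, 28, 26, 41, 24, 40, 11, 30, 9, 31, 7, 38, 5, 39, 15, 42, 13, 43, 10, 8, 19, 17, 3, 46, 1, 47, 6, 4, 23, 21, 14, 12, 27, 25, 2, 0, 35, 33],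
  [12, 13, 14, 15, 44, 45, 46, 47, 36, 37, 38, 39, 1, 0, 3, 2, 32, 33, 34, 35, 24, 25, 26, 27, 21, 20, 23, 22, 40, 41, 42, 43, 17, 16, 19, 18, 9, 8, 11, 10, 29, 28, 31, 30, 5, 4, 7, 6],
  [14, 15, 12, 13, 46, 47, 44, 45, 38, 39, 36, 37, 3, 2, 1, 0, 34, 35, 32, 33, 26, 27, 24, 25, 23, 22, 21, 20, 42, 43, 40, 41, 19, 18, 17, 16, 11, 10, 9, 8, 31, 30, 29, 28, 7, 6, 5, 4],
  [20, 21, 22, 23, 40, 41, 42, 43, 12, 13, 14, 15, 9, 8, 11, 10, 24, 25, 26, 27, 1, 0, 3, 2, 17, 16, 19, 18, 45, 44, 47, 46, 37, 36, 39, 38, 32, 33, 34, 35, 5, 4, 7, 6, 28, 29, 30, 31],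
  [22, 23, 20, 21, 42, 43, 40, 41, 14, 15, 12, 13, 11, 10, 9, 8, 26, 27, 24, 25, 3, 2, 1, 0, 19, 18, 17, 16, 47, 46, 45, 44, 39, 38, 37, 36, 34, 35, 32, 33, 7, 6, 5, 4, 30, 31, 28, 29],
  [29, 28, 31, 30, 33, 32, 35, 34, 21, 20, 23, 22, 44, 45, 46, 47, 41, 40, 43, 42, 8, 9, 10, 11, 36, 37, 38, 39, 0, 1, 2, 3, 4, 5, 6, 7, 25, 24, 27, 26, 16, 17, 18, 19, 13, 12, 15, 14],
  [31, 30, 29, 28, 35, 34, 33, 32, 23, 22, 21, 20, 46, 47, 44, 45, 43, 42, 41, 40, 10, 11, 8, 9, 38, 39, 36, 37, 2, 3, 0, 1, 6, 7, 4, 5, 27, 26, 25, 24, 18, 19, 16, 17, 15, 14, 13, 12],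
  [24, 25, 26, 27, 16, 17, 18, 19, 40, 41, 42, 43, 32, 33, 34, 35, 5, 4, 7, 6, 45, 44, 47, 46, 1, 0, 3, 2, 36, 37, 38, 39, 13, 12, 15, 14, 29, 28, 31, 30, 9, 8, 11, 10, 20, 21, 22, 23],
  [26, 27, 24, 25, 18, 19, 16, 17, 42, 43, 40, 41, 34, 35, 32, 33, 7, 6, 5, 4, 47, 46, 45, 44, 3, 2, 1, 0, 38, 39, 36, 37, 15, 14, 13, 12, 31, 30, 29, 28, 11, 10, 9, 8, 22, 23, 20, 21],
  [41, 40, 43, 42, 25, 24, 27, 26, 33, 32, 35, 34, 37, 36, 39, 38, 44, 45, 46, 47, 28, 29, 30, 31, 4, 5, 6, 7, 21, 20, 23, 22, 8, 9, 10, 11, 12, 13, 14, 15, 0, 1, 2, 3, 17, 16, 19, 18],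
  [43, 42, 41, 40, 27, 26, 25, 24, 35, 34, 33, 32, 39, 38, 37, 36, 46, 47, 44, 45, 30, 31, 28, 29, 6, 7, 4, 5, 23, 22, 21, 20, 10, 11, 8, 9, 14, 15, 12, 13, 2, 3, 0, 1, 19, 18, 17, 16],
  [8, 3, 5, 10, 11, 4, 1, 9, 7, 0, 6, 2, 20, 15, 17, 22, 23, 16, 13, 21, 19, 12, 18, 14, 32, 27, 29, 34, 35, 28, 25, 33, 31, 24, 30, 26, 44, 39, 41, 46, 47, 40, 37, 45, 43, 36, 42, 38],
  [1, 2, 3, 0, 7, 6, 11, 10, 4, 5, 8, 9, 13, 14, 15, 12, 19, 18, 23, 22, 16, 17, 20, 21, 25, 26, 27, 24, 31, 30, 35, 34, 28, 29, 32, 33, 37, 38, 39, 36, 43, 42, 47, 46, 40, 41, 44, 45]]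

/-- table lookup producing an element of `Fin 48` -/
def tab (l : List Nat) (v : Fin 48) : Fin 48 :=
  ⟨l.getD v.val 0 % 48, Nat.mod_lt _ (by norm_num)⟩

def mu : Fin 48 → Fin 48 := tab MU

def sg (n : Nat) : Fin 48 → Fin 48 := tab (SIG.getD n [])

/-- the graph whose edges join `v` and `σ v`; if `σ` is a permutation that is a product of
disjoint cycles of length ≥ 3, this is the corresponding 2-regular graph. -/
def cycG (σ : Fin 48 → Fin 48) : SimpleGraph (Fin 48) where
  Adj u v := u ≠ v ∧ (v = σ u ∨ u = σ v)
  symm := by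
    constructor
    rintro u v ⟨h1, h2⟩
    exact ⟨h1.symm, h2.symm⟩
  loopless := by
    constructor
    rintro v ⟨h, -⟩
    exact h rfl

lemma cycG_adj (σ : Fin 48 → Fin 48) (u v : Fin 48) :
    (cycG σ).Adj u v ↔ u ≠ v ∧ (v = σ u ∨ u = σ v) := Iff.rfl

lemma reach_mem {V : Type*} {H : SimpleGraph V} {S : Set V}
    (hS : ∀ x ∈ S, ∀ y, H.Adj x y → y ∈ S) {v w : V} (h : H.Reachable v w)
    (hv : v ∈ S) : w ∈ S := by
  obtain ⟨p⟩ := h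
  induction p with
  | nil => exact hv
  | cons h p ih => exact ih (hS _ hv _ h)

lemma supp_eq {V : Type*} {H : SimpleGraph V} {v : V} {S : Set V}
    (hcl : ∀ x ∈ S, ∀ y, H.Adj x y → y ∈ S) (hv : v ∈ S)
    (hr : ∀ x ∈ S, H.Reachable v x) : (H.connectedComponentMk v).supp = S := by
  ext w
  rw [SimpleGraph.ConnectedComponent.mem_supp_iff, SimpleGraph.ConnectedComponent.eq]
  constructor
  · intro h
    exact reach_mem hcl h.symm hv
  · intro hw
    exact (hr w hw).symm


lemma adj_sig (σ : Fin 48 → Fin 48) (h1 : ∀ v, σ v ≠ v) (v : Fin 48) :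
    (cycG σ).Adj v (σ v) :=
  ⟨fun h => h1 v h.symm, Or.inl rfl⟩

lemma inj3 (σ : Fin 48 → Fin 48) (h3 : ∀ v, σ (σ (σ v)) = v) {a b : Fin 48}
    (h : σ a = σ b) : a = b := by
  have := congrArg σ (congrArg σ h)
  rwa [h3, h3] at this

lemma inj4 (σ : Fin 48 → Fin 48) (h4 : ∀ v, σ (σ (σ (σ v))) = v) {a b : Fin 48}
    (h : σ a = σ b) : a = b := by
  have := congrArg σ (congrArg σ (congrArg σ h))
  rwa [h4, h4] at this

lemma nbhd3 (σ : Fin 48 → Fin 48) (h1 : ∀ v, σ v ≠ v) (h2 : ∀ v, σ (σ v) ≠ v)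
    (h3 : ∀ v, σ (σ (σ v)) = v) (v : Fin 48) :
    (cycG σ).neighborSet v = {σ v, σ (σ v)} := by
  ext w
  simp only [SimpleGraph.mem_neighborSet, cycG_adj, Set.mem_insert_iff,
    Set.mem_singleton_iff]
  constructor
  · rintro ⟨hne, (rfl | h)⟩
    · exact Or.inl rfl
    · right
      rw [h, h3]
  · rintro (rfl | rfl)
    · exact ⟨fun h => h1 v h.symm, Or.inl rfl⟩
    · exact ⟨fun h => h2 v h.symm, Or.inr (h3 v).symm⟩

lemma nbhd3_ncard (σ : Fin 48 → Fin 48) (h1 : ∀ v, σ v ≠ v) (h2 : ∀ v, σ (σ v) ≠ v)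
    (h3 : ∀ v, σ (σ (σ v)) = v) (v : Fin 48) :
    ((cycG σ).neighborSet v).ncard = 2 := by
  rw [nbhd3 σ h1 h2 h3]
  exact Set.ncard_pair fun h => h1 v (inj3 σ h3 h).symm

lemma supp3 (σ : Fin 48 → Fin 48) (h1 : ∀ v, σ v ≠ v) (h2 : ∀ v, σ (σ v) ≠ v)
    (h3 : ∀ v, σ (σ (σ v)) = v) (v : Fin 48) :
    ((cycG σ).connectedComponentMk v).supp = {v, σ v, σ (σ v)} := by
  apply supp_eq
  · have key : ∀ x, x ∈ ({v, σ v, σ (σ v)} : Set (Fin 48)) →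
        σ x ∈ ({v, σ v, σ (σ v)} : Set (Fin 48)) := by
      rintro x (rfl | rfl | rfl)
      · exact Or.inr (Or.inl rfl)
      · exact Or.inr (Or.inr rfl)
      · rw [h3]
        exact Or.inl rfl
    rintro x hx y ⟨hne, hy⟩
    rcases hy with rfl | hy
    · exact key x hx
    · have hyx : y = σ (σ x) := by
        have := congrArg σ (congrArg σ hy)
        rw [h3] at this
        exact this.symm
      rw [hyx]
      exact key _ (key _ hx)
  · exact Or.inl rfl
  · rintro x (rfl | rfl | rfl)
    · exact SimpleGraph.Reachable.refl _
    · exact (adj_sig σ h1 _).reachable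
    · exact ((adj_sig σ h1 _).reachable).trans (adj_sig σ h1 _).reachable

lemma supp3_ncard (σ : Fin 48 → Fin 48) (h1 : ∀ v, σ v ≠ v) (h2 : ∀ v, σ (σ v) ≠ v)
    (h3 : ∀ v, σ (σ (σ v)) = v) (v : Fin 48) :
    ((cycG σ).connectedComponentMk v).supp.ncard = 3 := by
  rw [supp3 σ h1 h2 h3]
  have d1 : v ≠ σ v := fun h => h1 v h.symm
  have d2 : v ≠ σ (σ v) := fun h => h2 v h.symm
  have d3 : σ v ≠ σ (σ v) := fun h => h1 v (inj3 σ h3 h).symm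
  rw [Set.ncard_insert_of_notMem (by simp [d1, d2]) (Set.toFinite _),
    Set.ncard_pair d3]

lemma nbhd4 (σ : Fin 48 → Fin 48) (h1 : ∀ v, σ v ≠ v) (h2 : ∀ v, σ (σ v) ≠ v)
    (h4 : ∀ v, σ (σ (σ (σ v))) = v) (v : Fin 48) :
    (cycG σ).neighborSet v = {σ v, σ (σ (σ v))} := by
  ext w
  simp only [SimpleGraph.mem_neighborSet, cycG_adj, Set.mem_insert_iff,
    Set.mem_singleton_iff]
  constructor
  · rintro ⟨hne, (rfl | h)⟩
    · exact Or.inl rfl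
    · right
      rw [h]
      have := congrArg σ (congrArg σ (congrArg σ h))
      rw [h4]
  · rintro (rfl | rfl)
    · exact ⟨fun h => h1 v h.symm, Or.inl rfl⟩
    · refine ⟨fun h => ?_, Or.inr (h4 v).symm⟩
      have := congrArg σ h
      rw [h4] at this
      exact h1 v this

lemma nbhd4_ncard (σ : Fin 48 → Fin 48) (h1 : ∀ v, σ v ≠ v) (h2 : ∀ v, σ (σ v) ≠ v)
    (h4 : ∀ v, σ (σ (σ (σ v))) = v) (v : Fin 48) :
    ((cycG σ).neighborSet v).ncard = 2 := by
  rw [nbhd4 σ h1 h2 h4]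
  refine Set.ncard_pair fun h => ?_
  exact h2 v (inj4 σ h4 h).symm

lemma supp4 (σ : Fin 48 → Fin 48) (h1 : ∀ v, σ v ≠ v) (h2 : ∀ v, σ (σ v) ≠ v)
    (h4 : ∀ v, σ (σ (σ (σ v))) = v) (v : Fin 48) :
    ((cycG σ).connectedComponentMk v).supp = {v, σ v, σ (σ v), σ (σ (σ v))} := by
  apply supp_eq
  · have key : ∀ x, x ∈ ({v, σ v, σ (σ v), σ (σ (σ v))} : Set (Fin 48)) →
        σ x ∈ ({v, σ v, σ (σ v), σ (σ (σ v))} : Set (Fin 48)) := by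
      rintro x (rfl | rfl | rfl | rfl)
      · exact Or.inr (Or.inl rfl)
      · exact Or.inr (Or.inr (Or.inl rfl))
      · exact Or.inr (Or.inr (Or.inr rfl))
      · rw [h4]
        exact Or.inl rfl
    rintro x hx y ⟨hne, hy⟩
    rcases hy with rfl | hy
    · exact key x hx
    · have hyx : y = σ (σ (σ x)) := by
        have := congrArg σ (congrArg σ (congrArg σ hy))
        rw [h4] at this
        exact this.symm
      rw [hyx]
      exact key _ (key _ (key _ hx))
  · exact Or.inl rfl
  · rintro x (rfl | rfl | rfl | rfl)
    · exact SimpleGraph.Reachable.refl _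
    · exact (adj_sig σ h1 _).reachable
    · exact ((adj_sig σ h1 _).reachable).trans (adj_sig σ h1 _).reachable
    · exact (((adj_sig σ h1 _).reachable).trans
        (adj_sig σ h1 _).reachable).trans (adj_sig σ h1 _).reachable

lemma supp4_ncard (σ : Fin 48 → Fin 48) (h1 : ∀ v, σ v ≠ v) (h2 : ∀ v, σ (σ v) ≠ v)
    (h4 : ∀ v, σ (σ (σ (σ v))) = v) (v : Fin 48) :
    ((cycG σ).connectedComponentMk v).supp.ncard = 4 := by
  rw [supp4 σ h1 h2 h4]
  have d1 : v ≠ σ v := fun h => h1 v h.symm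
  have d2 : v ≠ σ (σ v) := fun h => h2 v h.symm
  have d3 : v ≠ σ (σ (σ v)) := by
    intro h
    have := congrArg σ h
    rw [h4] at this
    exact h1 v this
  have d4 : σ v ≠ σ (σ v) := fun h => h1 v (inj4 σ h4 h).symm
  have d5 : σ v ≠ σ (σ (σ v)) := fun h => h2 v (inj4 σ h4 h).symm
  have d6 : σ (σ v) ≠ σ (σ (σ v)) := fun h => h1 v (inj4 σ h4 (inj4 σ h4 h)).symm
  rw [Set.ncard_insert_of_notMem (by simp [d1, d2, d3]) (Set.toFinite _),
    Set.ncard_insert_of_notMem (by simp [d4, d5]) (Set.toFinite _),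
    Set.ncard_pair d6]

-- computational facts about the tables
set_option maxHeartbeats 4000000 in
lemma hmu : ∀ v, mu (mu v) = v ∧ mu v ≠ v := by decide

set_option maxHeartbeats 4000000 in
lemma hfix : ∀ i : Fin 23, ∀ v, sg i.val v ≠ v ∧ sg i.val (sg i.val v) ≠ v := by
  decide

set_option maxHeartbeats 4000000 in
lemma htri : ∀ i : Fin 23, i.val < 7 → ∀ v,
    sg i.val (sg i.val (sg i.val v)) = v := by decide

set_option maxHeartbeats 4000000 in
lemma hquad : ∀ i : Fin 23, 7 ≤ i.val → ∀ v,
    sg i.val (sg i.val (sg i.val (sg i.val v))) = v := by decide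

set_option maxHeartbeats 8000000 in
lemma hdisj : ∀ i j : Fin 23, i ≠ j → ∀ u,
    sg i.val u ≠ sg j.val u ∧ sg j.val (sg i.val u) ≠ u := by decide

set_option maxHeartbeats 8000000 in
set_option maxRecDepth 100000 in
lemma hcov : ∀ u w : Fin 48, u ≠ w → w ≠ mu u →
    ∃ i : Fin 23, w = sg i.val u ∨ u = sg i.val w := by decide

set_option maxHeartbeats 4000000 in
lemma hIm : ∀ i : Fin 23, ∀ u, sg i.val u ≠ mu u := by decide

set_option maxHeartbeats 4000000 in
lemma hIm' (σ : Fin 48 → Fin 48) (hI : ∀ u, σ u ≠ mu u) : ∀ u, σ u ≠ mu u := hI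

lemma factor_le (σ : Fin 48 → Fin 48) (hI : ∀ u, σ u ≠ mu u) :
    cycG σ ≤ (⊤ : SimpleGraph (Fin 48)) \ cycG mu := by
  intro u w hw
  obtain ⟨hne, hor⟩ := hw
  rw [SimpleGraph.sdiff_adj, SimpleGraph.top_adj]
  refine ⟨hne, fun hM => ?_⟩
  obtain ⟨-, hM⟩ := hM
  have hM' : w = mu u := by
    rcases hM with h | h
    · exact h
    · rw [h]
      exact ((hmu w).1).symm
  rcases hor with h | h
  · exact hIm' σ hI u (h.symm.trans hM')
  · have huw : mu w = u := by rw [hM', (hmu u).1]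
    exact hIm' σ hI w (h.symm.trans huw.symm)

theorem hwp48_7_16 :
    ∃ M : SimpleGraph (Fin 48), (∀ v : Fin 48, (M.neighborSet v).ncard = 1) ∧
      ∃ F : Fin (7 + 16) → SimpleGraph (Fin 48),
        IsHWPSolution ((⊤ : SimpleGraph (Fin 48)) \ M) 7 16 F := by
  refine ⟨cycG mu, ?_, fun i => cycG (sg i.val), ?_, ?_, ?_⟩
  · -- M is a perfect matching
    intro v
    have hset : (cycG mu).neighborSet v = {mu v} := by
      ext w
      simp only [SimpleGraph.mem_neighborSet, cycG_adj, Set.mem_singleton_iff]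
      constructor
      · rintro ⟨hne, (rfl | h)⟩
        · rfl
        · rw [h, (hmu w).1]
      · rintro rfl
        exact ⟨fun h => (hmu v).2 h.symm, Or.inl rfl⟩
    rw [hset, Set.ncard_singleton]
  · -- triangle factors
    intro i hi
    have h1 : ∀ v, sg i.val v ≠ v := fun v => (hfix ⟨i.val, by omega⟩ v).1
    have h2 : ∀ v, sg i.val (sg i.val v) ≠ v := fun v => (hfix ⟨i.val, by omega⟩ v).2
    have h3 : ∀ v, sg i.val (sg i.val (sg i.val v)) = v := fun v =>
      htri ⟨i.val, by omega⟩ hi v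
    have hI : ∀ u, sg i.val u ≠ mu u := fun u => hIm ⟨i.val, by omega⟩ u
    exact ⟨⟨factor_le _ hI, nbhd3_ncard _ h1 h2 h3⟩, supp3_ncard _ h1 h2 h3⟩
  · -- quadrangle factors
    intro i hi
    have h1 : ∀ v, sg i.val v ≠ v := fun v => (hfix ⟨i.val, by omega⟩ v).1
    have h2 : ∀ v, sg i.val (sg i.val v) ≠ v := fun v => (hfix ⟨i.val, by omega⟩ v).2
    have h4 : ∀ v, sg i.val (sg i.val (sg i.val (sg i.val v))) = v := fun v =>
      hquad ⟨i.val, by omega⟩ hi v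
    have hI : ∀ u, sg i.val u ≠ mu u := fun u => hIm ⟨i.val, by omega⟩ u
    exact ⟨⟨factor_le _ hI, nbhd4_ncard _ h1 h2 h4⟩, supp4_ncard _ h1 h2 h4⟩
  · -- edge partition
    intro e he
    induction e using Sym2.ind with
    | _ u w =>
      rw [SimpleGraph.mem_edgeSet, SimpleGraph.sdiff_adj, SimpleGraph.top_adj] at he
      obtain ⟨hne, hnM⟩ := he
      have hwmu : w ≠ mu u := fun h => hnM ⟨hne, Or.inl h⟩
      obtain ⟨i, hi⟩ := hcov u w hne hwmu
      refine ⟨⟨i.val, by omega⟩, ?_, ?_⟩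
      · simp only [SimpleGraph.mem_edgeSet]
        exact ⟨hne, hi⟩
      · rintro j hj
        simp only [SimpleGraph.mem_edgeSet] at hj
        obtain ⟨-, hj⟩ := hj
        by_contra hne'
        have hji : (⟨j.val, by omega⟩ : Fin 23) ≠ i := by
          intro h
          apply hne'
          have hv : j.val = i.val := congrArg Fin.val h
          exact Fin.ext hv
        have hj' : w = sg (⟨j.val, by omega⟩ : Fin 23).val u ∨
            u = sg (⟨j.val, by omega⟩ : Fin 23).val w := hj
        rcases hj' with h | h
        · rcases hi with h2 | h2
          · exact (hdisj ⟨j.val, by omega⟩ i hji u).1 (h.symm.trans h2)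
          · exact (hdisj ⟨j.val, by omega⟩ i hji u).2 (by rw [← h, ← h2])
        · rcases hi with h2 | h2
          · exact (hdisj i ⟨j.val, by omega⟩ hji.symm u).2 (by rw [← h2, ← h])
          · exact (hdisj ⟨j.val, by omega⟩ i hji w).1 (h.symm.trans h2)
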